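/- If Q(x,y) is a homogeneous polynomial of degree k with ∫₀^{2π} Q(cos θ, sin θ) dθ = 0, and R(ρ) = Σ_{i=0}^m a_i ρ^{2i}, then any solution ρ(θ) of the ODE dρ/dθ = ρ^{k+1} Q(cos θ, sin θ) R(ρ) with sufficiently small positive initial value ρ(0) = ρ₀ is defined on [0, 2π] and is 2π-periodic, i.e., ρ(2π) = ρ(0). -/

import Mathlib

open Real MvPolynomial

set_option maxHeartbeats 1000000

open Real MvPolynomial

private lemma gronwall_icc {L T α δ : ℝ} {ρ f' : ℝ → ℝ}
    (hderiv : ∀ θ ∈ Set.Icc 0 T, HasDerivAt ρ (f' θ) θ)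
    (hbound : ∀ θ ∈ Set.Icc 0 T, ρ θ ∈ Set.Icc α δ → |f' θ| ≤ L * ρ θ)
    {θ1 : ℝ} (hθ1 : θ1 ∈ Set.Icc 0 T)
    (hin : ∀ s ∈ Set.Icc 0 θ1, ρ s ∈ Set.Icc α δ) :
    ρ θ1 ∈ Set.Icc (ρ 0 * Real.exp (-(L * θ1))) (ρ 0 * Real.exp (L * θ1)) := by
  have hsub : Set.Icc (0:ℝ) θ1 ⊆ Set.Icc 0 T := Set.Icc_subset_Icc le_rfl hθ1.2
  have h0mem : (0:ℝ) ∈ Set.Icc (0:ℝ) θ1 := ⟨le_rfl, hθ1.1⟩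
  have hθmem : θ1 ∈ Set.Icc (0:ℝ) θ1 := ⟨hθ1.1, le_rfl⟩
  have hdV : ∀ σ : ℝ, ∀ c ∈ Set.Icc (0:ℝ) θ1,
      HasDerivAt (fun t => ρ t * Real.exp (σ * t)) ((f' c + σ * ρ c) * Real.exp (σ * c)) c := by
    intro σ c hc
    have h1 : HasDerivAt (fun t : ℝ => σ * t) σ c := by
      simpa using (hasDerivAt_id c).const_mul σ
    have h2 := h1.exp
    have h3 : HasDerivAt (fun t => ρ t * Real.exp (σ * t))
        (f' c * Real.exp (σ * c) + ρ c * (Real.exp (σ * c) * σ)) c := (hderiv c (hsub hc)).mul h2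
    convert h3 using 1
    ring
  have hcontV : ∀ σ : ℝ, ContinuousOn (fun t => ρ t * Real.exp (σ * t)) (Set.Icc 0 θ1) :=
    fun σ => fun c hc => ((hdV σ c hc).continuousAt).continuousWithinAt
  have hdiffV : ∀ σ : ℝ, DifferentiableOn ℝ (fun t => ρ t * Real.exp (σ * t))
      (interior (Set.Icc 0 θ1)) := by
    intro σ c hc
    rw [interior_Icc] at hc
    exact ((hdV σ c (Set.Ioo_subset_Icc_self hc)).differentiableAt).differentiableWithinAt
  have hAnti : AntitoneOn (fun t => ρ t * Real.exp (-L * t)) (Set.Icc 0 θ1) := by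
    apply antitoneOn_of_deriv_nonpos (convex_Icc _ _) (hcontV (-L)) (hdiffV (-L))
    intro c hc
    rw [interior_Icc] at hc
    have hc' := Set.Ioo_subset_Icc_self hc
    rw [(hdV (-L) c hc').deriv]
    have hb := hbound c (hsub hc') (hin c hc')
    have h4 : f' c + (-L) * ρ c ≤ 0 := by
      have := le_abs_self (f' c); linarith
    exact mul_nonpos_of_nonpos_of_nonneg h4 (Real.exp_pos _).le
  have hMono : MonotoneOn (fun t => ρ t * Real.exp (L * t)) (Set.Icc 0 θ1) := by
    apply monotoneOn_of_deriv_nonneg (convex_Icc _ _) (hcontV L) (hdiffV L)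
    intro c hc
    rw [interior_Icc] at hc
    have hc' := Set.Ioo_subset_Icc_self hc
    rw [(hdV L c hc').deriv]
    have hb := hbound c (hsub hc') (hin c hc')
    have h4 : 0 ≤ f' c + L * ρ c := by
      have := neg_abs_le (f' c); linarith
    exact mul_nonneg h4 (Real.exp_pos _).le
  have hv : ρ θ1 * Real.exp (-L * θ1) ≤ ρ 0 * Real.exp (-L * 0) := hAnti h0mem hθmem hθ1.1
  have hu : ρ 0 * Real.exp (L * 0) ≤ ρ θ1 * Real.exp (L * θ1) := hMono h0mem hθmem hθ1.1
  rw [mul_zero, Real.exp_zero, mul_one] at hv hu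
  have hE : Real.exp (L * θ1) * Real.exp (-L * θ1) = 1 := by
    rw [← Real.exp_add]; ring_nf; exact Real.exp_zero
  constructor
  · have := mul_le_mul_of_nonneg_right hu (Real.exp_pos (-L * θ1)).le
    calc ρ 0 * Real.exp (-(L * θ1)) = ρ 0 * Real.exp (-L * θ1) := by ring_nf
      _ ≤ ρ θ1 * Real.exp (L * θ1) * Real.exp (-L * θ1) := this
      _ = ρ θ1 := by rw [mul_assoc, hE, mul_one]
  · have := mul_le_mul_of_nonneg_right hv (Real.exp_pos (L * θ1)).le
    calc ρ θ1 = ρ θ1 * (Real.exp (L * θ1) * Real.exp (-L * θ1)) := by rw [hE, mul_one]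
      _ = ρ θ1 * Real.exp (-L * θ1) * Real.exp (L * θ1) := by ring
      _ ≤ ρ 0 * Real.exp (L * θ1) := mul_le_mul_of_nonneg_right hv (Real.exp_pos _).le

private lemma band {L T α δ : ℝ} {ρ f' : ℝ → ℝ}
    (hL : 0 ≤ L) (hT : 0 ≤ T) (hα : 0 ≤ α)
    (hderiv : ∀ θ ∈ Set.Icc 0 T, HasDerivAt ρ (f' θ) θ)
    (hbound : ∀ θ ∈ Set.Icc 0 T, ρ θ ∈ Set.Icc α δ → |f' θ| ≤ L * ρ θ)
    (hlow : α < ρ 0 * Real.exp (-(L * T)))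
    (hhigh : ρ 0 * Real.exp (L * T) < δ) :
    ∀ θ ∈ Set.Icc 0 T, ρ θ ∈ Set.Icc (ρ 0 * Real.exp (-(L * θ))) (ρ 0 * Real.exp (L * θ)) := by
  have hρ0pos : 0 < ρ 0 := by nlinarith [Real.exp_pos (-(L * T)), hα.trans_lt hlow]
  have hexpTle : Real.exp (-(L * T)) ≤ 1 := by
    rw [Real.exp_le_one_iff]
    nlinarith [mul_nonneg hL hT]
  have honele : (1:ℝ) ≤ Real.exp (L * T) := by
    rw [show (1:ℝ) = Real.exp 0 from (Real.exp_zero).symm]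
    exact Real.exp_le_exp.2 (by nlinarith [mul_nonneg hL hT])
  have hmem0 : ρ 0 ∈ Set.Ioo α δ := by
    constructor
    · nlinarith
    · nlinarith
  have hαδ : α < δ := hmem0.1.trans hmem0.2
  have hcontρ : ContinuousOn ρ (Set.Icc 0 T) :=
    fun c hc => ((hderiv c hc).continuousAt).continuousWithinAt
  have claimA : ∀ θ ∈ Set.Icc (0:ℝ) T, ρ θ ∈ Set.Ioo α δ := by
    by_contra hcon
    push_neg at hcon
    obtain ⟨θb, hθb, hbad⟩ := hcon
    set B := Set.Icc (0:ℝ) T ∩ ρ ⁻¹' (Set.Ioo α δ)ᶜ with hB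
    have hBne : B.Nonempty := ⟨θb, hθb, hbad⟩
    have hBclosed : IsClosed B :=
      hcontρ.preimage_isClosed_of_isClosed isClosed_Icc isOpen_Ioo.isClosed_compl
    have hBbdd : BddBelow B := ⟨0, fun x hx => hx.1.1⟩
    set θ1 := sInf B with hθ1def
    have hθ1B : θ1 ∈ B := hBclosed.csInf_mem hBne hBbdd
    have hθ1T : θ1 ∈ Set.Icc (0:ℝ) T := hθ1B.1
    have hθ1ne : ρ θ1 ∉ Set.Ioo α δ := hθ1B.2
    have hθ1pos : 0 < θ1 := by
      rcases hθ1T.1.lt_or_eq with h | h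
      · exact h
      · exact absurd (h ▸ hmem0) hθ1ne
    have hbefore : ∀ c, 0 ≤ c → c < θ1 → ρ c ∈ Set.Ioo α δ := by
      intro c hc0 hc1
      by_contra hcc
      have hcB : c ∈ B := ⟨⟨hc0, hc1.le.trans hθ1T.2⟩, hcc⟩
      exact absurd (csInf_le hBbdd hcB) (not_le.2 hc1)
    have hclose : ρ θ1 ∈ Set.Icc α δ := by
      have ht : Filter.Tendsto ρ (nhdsWithin θ1 (Set.Iio θ1)) (nhds (ρ θ1)) :=
        ((hderiv θ1 hθ1T).continuousAt).continuousWithinAt.tendsto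
      have hev : ∀ᶠ c in nhdsWithin θ1 (Set.Iio θ1), ρ c ∈ Set.Ioo α δ := by
        have h3 : ∀ᶠ c in nhdsWithin θ1 (Set.Iio θ1), 0 < c :=
          Filter.Eventually.filter_mono nhdsWithin_le_nhds (eventually_gt_nhds hθ1pos)
        filter_upwards [h3, self_mem_nhdsWithin] with c hc0 hc1
        exact hbefore c hc0.le hc1
      have := mem_closure_of_tendsto ht hev
      rwa [closure_Ioo hαδ.ne] at this
    have hinside : ∀ c ∈ Set.Icc (0:ℝ) θ1, ρ c ∈ Set.Icc α δ := by
      intro c hc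
      rcases hc.2.lt_or_eq with h | h
      · exact Set.Ioo_subset_Icc_self (hbefore c hc.1 h)
      · rw [h]; exact hclose
    have hg := gronwall_icc hderiv hbound hθ1T hinside
    apply hθ1ne
    constructor
    · calc α < ρ 0 * Real.exp (-(L * T)) := hlow
        _ ≤ ρ 0 * Real.exp (-(L * θ1)) := by
            apply mul_le_mul_of_nonneg_left _ hρ0pos.le
            exact Real.exp_le_exp.2 (by nlinarith [hθ1T.2])
        _ ≤ ρ θ1 := hg.1
    · calc ρ θ1 ≤ ρ 0 * Real.exp (L * θ1) := hg.2
        _ ≤ ρ 0 * Real.exp (L * T) := by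
            apply mul_le_mul_of_nonneg_left _ hρ0pos.le
            exact Real.exp_le_exp.2 (by nlinarith [hθ1T.2])
        _ < δ := hhigh
  intro θ hθ
  exact gronwall_icc hderiv hbound hθ
    (fun c hc => Set.Ioo_subset_Icc_self (claimA c ⟨hc.1, hc.2.trans hθ.2⟩))



/-- Theorem 1 (first part, quantitative form): solutions of the polar ODE
`dρ/dθ = ρ^(k+1) Q(cos θ, sin θ) R(ρ)` with sufficiently small positive initial
value are defined on `[0, 2π]` and satisfy `ρ(2π) = ρ(0)`. -/
theorem stmt0 (k m : ℕ) (hk : 1 ≤ k) (Q : MvPolynomial (Fin 2) ℝ)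
    (hQ : Q.IsHomogeneous k) (a : ℕ → ℝ)
    (Qf : ℝ → ℝ → ℝ) (hQf : ∀ x y, Qf x y = eval ![x, y] Q)
    (R : ℝ → ℝ) (hR : ∀ ρ, R ρ = ∑ i ∈ Finset.range (m + 1), a i * ρ ^ (2 * i))
    (hint : ∫ θ in (0:ℝ)..(2 * π), Qf (cos θ) (sin θ) = 0) :
    ∃ ε > 0, ∀ ρ₀ : ℝ, 0 < ρ₀ → ρ₀ < ε →
      ((∃ ρ : ℝ → ℝ, ρ 0 = ρ₀ ∧ ∀ θ ∈ Set.Icc (0:ℝ) (2 * π),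
          HasDerivAt ρ (ρ θ ^ (k + 1) * Qf (cos θ) (sin θ) * R (ρ θ)) θ) ∧
        ∀ ρ : ℝ → ℝ, ρ 0 = ρ₀ →
          (∀ θ ∈ Set.Icc (0:ℝ) (2 * π),
            HasDerivAt ρ (ρ θ ^ (k + 1) * Qf (cos θ) (sin θ) * R (ρ θ)) θ) →
          ρ (2 * π) = ρ 0) := by
  have hπ : (0:ℝ) ≤ 2 * π := by positivity
  by_cases hR0 : ∀ x : ℝ, R x = 0
  · refine ⟨1, one_pos, fun ρ₀ hρ₀pos _ => ⟨⟨fun _ => ρ₀, rfl, ?_⟩, ?_⟩⟩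
    · intro θ hθ
      simpa [hR0] using hasDerivAt_const θ ρ₀
    · intro ρ hρinit hρd
      have := constant_of_has_deriv_right_zero (f := ρ) (a := 0) (b := 2 * π)
        (fun c hc => ((hρd c hc).continuousAt).continuousWithinAt)
        (fun c hc => by
          have h1 := hρd c (Set.Ico_subset_Icc_self hc)
          rw [hR0, mul_zero] at h1
          exact h1.hasDerivWithinAt)
      exact this (2 * π) ⟨hπ, le_rfl⟩
  push_neg at hR0
  obtain ⟨x₀, hx₀⟩ := hR0
  -- continuous data
  set g : ℝ → ℝ := fun θ => Qf (Real.cos θ) (Real.sin θ) with hg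
  have hgcont : Continuous g := by
    have h1 : Continuous fun θ : ℝ => (![Real.cos θ, Real.sin θ] : Fin 2 → ℝ) := by
      apply continuous_pi
      intro i
      fin_cases i <;> simp [Real.continuous_cos, Real.continuous_sin]
    have h2 : g = fun θ => eval ![Real.cos θ, Real.sin θ] Q := by
      funext θ; rw [hg]; exact hQf _ _
    rw [h2]
    exact (MvPolynomial.continuous_eval (p := Q)).comp h1
  have hRc : Continuous R := by
    have h1 : R = fun ρ => ∑ i ∈ Finset.range (m + 1), a i * ρ ^ (2 * i) := funext hR
    rw [h1]
    exact continuous_finset_sum _ fun i _ => continuous_const.mul (continuous_pow _)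
  set h : ℝ → ℝ := fun x => x ^ (k + 1) * R x with hh
  have hhcont : Continuous h := (continuous_pow _).mul hRc
  -- polynomial and zero-free interval
  obtain ⟨δ, hδ0, hδroot⟩ : ∃ δ : ℝ, 0 < δ ∧ ∀ x ∈ Set.Ioc (0:ℝ) δ, R x ≠ 0 := by
    set P : Polynomial ℝ := ∑ i ∈ Finset.range (m + 1), Polynomial.C (a i) * Polynomial.X ^ (2 * i)
      with hPdef
    have hPeval : ∀ x, P.eval x = R x := by
      intro x
      rw [hR, hPdef]
      simp [Polynomial.eval_finset_sum]
    have hPne : P ≠ 0 := fun hc => hx₀ (by rw [← hPeval, hc, Polynomial.eval_zero])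
    have hfin : ({x : ℝ | P.IsRoot x} ∩ Set.Ioc 0 1).Finite :=
      (Polynomial.finite_setOf_isRoot hPne).inter_of_left _
    rcases Set.eq_empty_or_nonempty ({x : ℝ | P.IsRoot x} ∩ Set.Ioc 0 1) with he | hne
    · refine ⟨1, one_pos, fun x hx hc => ?_⟩
      exact (Set.eq_empty_iff_forall_notMem.mp he x)
        ⟨show P.IsRoot x by rw [Polynomial.IsRoot, hPeval]; exact hc, hx⟩
    · have hSne : hfin.toFinset.Nonempty := by
        rwa [Set.Finite.toFinset_nonempty]
      set μ := hfin.toFinset.min' hSne with hμdef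
      have hμmem : μ ∈ {x : ℝ | P.IsRoot x} ∩ Set.Ioc 0 1 := by
        have := hfin.toFinset.min'_mem hSne
        rwa [Set.Finite.mem_toFinset] at this
      have hμpos : 0 < μ := hμmem.2.1
      refine ⟨μ / 2, by linarith, fun x hx hc => ?_⟩
      have hxS : x ∈ hfin.toFinset := by
        rw [Set.Finite.mem_toFinset]
        exact ⟨show P.IsRoot x by rw [Polynomial.IsRoot, hPeval]; exact hc,
          hx.1, hx.2.trans (by linarith [hμmem.2.2])⟩
      have := hfin.toFinset.min'_le x hxS
      linarith [hx.2]
  have hhne : ∀ x ∈ Set.Ioc (0:ℝ) δ, h x ≠ 0 := fun x hx =>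
    mul_ne_zero (pow_ne_zero _ (ne_of_gt hx.1)) (hδroot x hx)
  -- constant sign
  obtain ⟨s, hs1, hspos⟩ : ∃ s : ℝ, (s = 1 ∨ s = -1) ∧ ∀ x ∈ Set.Ioc (0:ℝ) δ, 0 < s * h x := by
    have hδmem : δ ∈ Set.Ioc (0:ℝ) δ := ⟨hδ0, le_rfl⟩
    have key : ∀ x ∈ Set.Ioc (0:ℝ) δ, 0 < h x * h δ := by
      intro x hx
      rcases lt_trichotomy (h x * h δ) 0 with hlt | heq | hgt
      · exfalso
        have h0 : (0:ℝ) ∈ Set.uIcc (h x) (h δ) := by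
          rcases mul_neg_iff.mp hlt with ⟨h1, h2⟩ | ⟨h1, h2⟩
          · exact Set.mem_uIcc.2 (Or.inr ⟨h2.le, h1.le⟩)
          · exact Set.mem_uIcc.2 (Or.inl ⟨h1.le, h2.le⟩)
        obtain ⟨c, hc1, hc2⟩ := intermediate_value_uIcc (hhcont.continuousOn) h0
        rw [Set.uIcc_of_le hx.2] at hc1
        exact hhne c ⟨hx.1.trans_le hc1.1, hc1.2⟩ hc2
      · exfalso
        rcases mul_eq_zero.mp heq with hc | hc
        exacts [hhne x hx hc, hhne δ hδmem hc]
      · exact hgt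
    rcases lt_or_gt_of_ne (hhne δ hδmem) with hneg | hpos
    · exact ⟨-1, Or.inr rfl, fun x hx => by nlinarith [key x hx]⟩
    · exact ⟨1, Or.inl rfl, fun x hx => by nlinarith [key x hx]⟩
  have hsne : s ≠ 0 := by rcases hs1 with h' | h' <;> rw [h'] <;> norm_num
  have hsinv : s⁻¹ = s := by rcases hs1 with h' | h' <;> rw [h'] <;> norm_num
  have hs2 : s * s = 1 := by rcases hs1 with h' | h' <;> rw [h'] <;> norm_num
  -- bounds
  obtain ⟨Cg, hCg⟩ : ∃ Cg : ℝ, ∀ θ ∈ Set.Icc (0:ℝ) (2 * π), |g θ| ≤ Cg := by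
    obtain ⟨C, hC⟩ := isCompact_Icc.exists_bound_of_continuousOn (hgcont.continuousOn)
    exact ⟨C, fun θ hθ => by have := hC θ hθ; rwa [Real.norm_eq_abs] at this⟩
  obtain ⟨Mh, hMh⟩ : ∃ Mh : ℝ, ∀ x ∈ Set.Icc (0:ℝ) δ, |x ^ k * R x| ≤ Mh := by
    obtain ⟨C, hC⟩ := isCompact_Icc.exists_bound_of_continuousOn
      (((continuous_pow k).mul hRc).continuousOn)
    exact ⟨C, fun x hx => by have := hC x hx; rwa [Real.norm_eq_abs] at this⟩
  have hCg0 : 0 ≤ Cg := (abs_nonneg _).trans (hCg 0 ⟨le_rfl, hπ⟩)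
  have hMh0 : 0 ≤ Mh := (abs_nonneg _).trans (hMh 0 ⟨le_rfl, hδ0.le⟩)
  set L : ℝ := Cg * Mh + 1 with hLdef
  have hL0 : 0 < L := by positivity
  have key_bound : ∀ x ∈ Set.Icc (0:ℝ) δ, ∀ θ ∈ Set.Icc (0:ℝ) (2 * π),
      |x ^ (k + 1) * g θ * R x| ≤ L * x := by
    intro x hx θ hθ
    have hx0 : 0 ≤ x := hx.1
    have e1 : |x ^ (k + 1) * g θ * R x| = x * (|x ^ k * R x| * |g θ|) := by
      rw [abs_mul, abs_mul, abs_pow, abs_of_nonneg hx0, abs_mul, abs_pow, abs_of_nonneg hx0,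
        pow_succ]
      ring
    rw [e1]
    have h1 := hMh x hx
    have h2 := hCg θ hθ
    have h3 : |x ^ k * R x| * |g θ| ≤ Mh * Cg :=
      mul_le_mul h1 h2 (abs_nonneg _) hMh0
    nlinarith [mul_le_mul_of_nonneg_left h3 hx0]
  -- choose ε
  refine ⟨(δ / 2) * Real.exp (-(L * (2 * π))), by positivity, fun ρ₀ hρ₀pos hρ₀ε => ?_⟩
  have hexppos := Real.exp_pos (-(L * (2 * π)))
  have hexple : Real.exp (-(L * (2 * π))) ≤ 1 := by
    rw [Real.exp_le_one_iff]
    nlinarith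
  have hhigh0 : ρ₀ * Real.exp (L * (2 * π)) < δ := by
    have := mul_lt_mul_of_pos_right hρ₀ε (Real.exp_pos (L * (2 * π)))
    rw [mul_assoc, ← Real.exp_add] at this
    simp only [neg_add_cancel, Real.exp_zero, mul_one] at this
    linarith
  have hρ₀δ2 : ρ₀ < δ / 2 := by nlinarith
  set ℓ : ℝ := ρ₀ * Real.exp (-(L * (2 * π))) with hℓdef
  have hℓpos : 0 < ℓ := by positivity
  have hℓρ₀ : ℓ ≤ ρ₀ := by nlinarith
  have hℓδ : ℓ < δ := by nlinarith
  -- clipped field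
  set clip : ℝ → ℝ := fun x => max (ℓ / 2) (min x δ) with hclip
  have hclipmem : ∀ x, clip x ∈ Set.Icc (ℓ / 2) δ := fun x =>
    ⟨le_max_left _ _, max_le (by linarith) (min_le_right _ _)⟩
  have hclipid : ∀ x ∈ Set.Icc (ℓ / 2) δ, clip x = x := by
    intro x hx
    rw [hclip]
    simp only [min_eq_left hx.2, max_eq_right hx.1]
  have hclipcont : Continuous clip := continuous_const.max (continuous_id.min continuous_const)
  have hsubIcc : Set.Icc (ℓ / 2) δ ⊆ Set.Ioc (0:ℝ) δ := fun x hx =>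
    ⟨lt_of_lt_of_le (by linarith) hx.1, hx.2⟩
  set hstar : ℝ → ℝ := fun x => s * h (clip x) with hstar_def
  have hstar_pos : ∀ x, 0 < hstar x := fun x => hspos _ (hsubIcc (hclipmem x))
  have hstar_cont : Continuous hstar := continuous_const.mul (hhcont.comp hclipcont)
  have hstarval : ∀ x ∈ Set.Icc (ℓ / 2) δ, hstar x = s * h x := by
    intro x hx; rw [hstar_def]; simp only [hclipid x hx]
  obtain ⟨c2, hc2⟩ : ∃ c2 : ℝ, ∀ x, hstar x ≤ c2 := by
    obtain ⟨C, hC⟩ := isCompact_Icc.exists_bound_of_continuousOn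
      ((continuous_const.mul hhcont).continuousOn (s := Set.Icc (ℓ / 2) δ))
    refine ⟨C, fun x => ?_⟩
    have := hC (clip x) (hclipmem x)
    rw [Real.norm_eq_abs] at this
    calc hstar x = s * h (clip x) := rfl
      _ ≤ |s * h (clip x)| := le_abs_self _
      _ ≤ C := this
  have hc2pos : 0 < c2 := (hstar_pos 0).trans_le (hc2 0)
  -- F and its inverse
  set Fv : ℝ → ℝ := fun x => ∫ t in ρ₀..x, (hstar t)⁻¹ with hFdef
  have hinvcont : Continuous fun t => (hstar t)⁻¹ := hstar_cont.inv₀ fun t => (hstar_pos t).ne'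
  have hFD : ∀ x, HasDerivAt Fv (hstar x)⁻¹ x := by
    intro x
    exact intervalIntegral.integral_hasDerivAt_right
      (hinvcont.intervalIntegrable _ _)
      (hinvcont.stronglyMeasurableAtFilter _ _)
      hinvcont.continuousAt
  have hFcont : Continuous Fv := by
    rw [continuous_iff_continuousAt]; exact fun x => (hFD x).continuousAt
  have hFmono : StrictMono Fv := strictMono_of_deriv_pos fun x => by
    rw [(hFD x).deriv]; exact inv_pos.2 (hstar_pos x)
  have hgrow : ∀ x : ℝ, ρ₀ ≤ x → (x - ρ₀) / c2 ≤ Fv x := by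
    intro x hx
    have hmono := intervalIntegral.integral_mono_on hx
      (intervalIntegrable_const (μ := MeasureTheory.volume) (c := c2⁻¹))
      (hinvcont.intervalIntegrable _ _)
      (fun t _ => inv_anti₀ (hstar_pos t) (hc2 t))
    rw [intervalIntegral.integral_const, smul_eq_mul] at hmono
    calc (x - ρ₀) / c2 = (x - ρ₀) * c2⁻¹ := by ring
      _ ≤ Fv x := hmono
  have hgrow' : ∀ x : ℝ, x ≤ ρ₀ → Fv x ≤ (x - ρ₀) / c2 := by
    intro x hx
    have hmono := intervalIntegral.integral_mono_on hx
      (intervalIntegrable_const (μ := MeasureTheory.volume) (c := c2⁻¹))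
      (hinvcont.intervalIntegrable _ _)
      (fun t _ => inv_anti₀ (hstar_pos t) (hc2 t))
    rw [intervalIntegral.integral_const, smul_eq_mul] at hmono
    have hsymm : Fv x = -∫ t in x..ρ₀, (hstar t)⁻¹ := by
      rw [hFdef]
      exact (intervalIntegral.integral_symm _ _)
    rw [hsymm]
    have : (ρ₀ - x) * c2⁻¹ ≤ ∫ t in x..ρ₀, (hstar t)⁻¹ := hmono
    calc -∫ t in x..ρ₀, (hstar t)⁻¹ ≤ -((ρ₀ - x) * c2⁻¹) := by linarith
      _ = (x - ρ₀) / c2 := by ring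
  have htop : Filter.Tendsto Fv Filter.atTop Filter.atTop := by
    apply Filter.tendsto_atTop_mono' Filter.atTop
      (Filter.eventually_atTop.2 ⟨ρ₀, fun x hx => hgrow x hx⟩)
    apply Filter.Tendsto.atTop_div_const hc2pos
    exact Filter.tendsto_atTop_add_const_right _ _ Filter.tendsto_id
  have hbot : Filter.Tendsto Fv Filter.atBot Filter.atBot := by
    apply Filter.tendsto_atBot_mono' Filter.atBot
      (Filter.eventually_atBot.2 ⟨ρ₀, fun x hx => hgrow' x hx⟩)
    apply Filter.Tendsto.atBot_div_const hc2pos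
    exact Filter.tendsto_atBot_add_const_right _ _ Filter.tendsto_id
  have hFsurj : Function.Surjective Fv := hFcont.surjective htop hbot
  set e : ℝ ≃o ℝ := StrictMono.orderIsoOfSurjective Fv hFmono hFsurj with hedef
  have he : ∀ x, e x = Fv x := fun x => rfl
  have heF : ∀ y, Fv (e.symm y) = y := fun y => by
    rw [← he]; exact e.apply_symm_apply y
  have hesymmcont : Continuous (⇑e.symm) := OrderIso.continuous e.symm
  -- G
  set G : ℝ → ℝ := fun θ => ∫ t in (0:ℝ)..θ, g t with hGdef
  have hGD : ∀ θ, HasDerivAt G (g θ) θ := fun θ =>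
    intervalIntegral.integral_hasDerivAt_right
      (hgcont.intervalIntegrable _ _)
      (hgcont.stronglyMeasurableAtFilter _ _)
      hgcont.continuousAt
  have hG0 : G 0 = 0 := intervalIntegral.integral_same
  have hG2π : G (2 * π) = 0 := hint
  have hF0 : Fv ρ₀ = 0 := intervalIntegral.integral_same
  constructor
  · -- existence
    set ρe : ℝ → ℝ := fun θ => e.symm (s * G θ) with hρedef
    have hρe0 : ρe 0 = ρ₀ := by
      rw [hρedef]
      simp only [hG0, mul_zero]
      have h1 : e ρ₀ = 0 := by rw [he]; exact hF0
      rw [← h1, e.symm_apply_apply]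
    have hρeD : ∀ θ, HasDerivAt ρe (hstar (ρe θ) * (s * g θ)) θ := by
      intro θ
      have hsym : HasDerivAt (⇑e.symm) ((hstar (e.symm (s * G θ)))⁻¹)⁻¹ (s * G θ) := by
        apply HasDerivAt.of_local_left_inverse hesymmcont.continuousAt
          (hFD (e.symm (s * G θ))) (inv_ne_zero (hstar_pos _).ne')
        exact Filter.Eventually.of_forall heF
      have hGd : HasDerivAt (fun θ => s * G θ) (s * g θ) θ := (hGD θ).const_mul s
      have hcomp := hsym.comp θ hGd
      rw [inv_inv] at hcomp
      exact hcomp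
    have hbandE := band (L := L) (T := 2 * π) (α := ℓ / 2) (δ := δ)
      (f' := fun θ => hstar (ρe θ) * (s * g θ)) hL0.le hπ (by positivity)
      (fun θ _ => hρeD θ)
      (by
        intro θ hθ hmem
        show |hstar (ρe θ) * (s * g θ)| ≤ L * ρe θ
        rw [hstarval _ hmem]
        have heq : s * h (ρe θ) * (s * g θ) = ρe θ ^ (k + 1) * g θ * R (ρe θ) := by
          rw [hh]
          have : s * (ρe θ ^ (k + 1) * R (ρe θ)) * (s * g θ)
              = (s * s) * (ρe θ ^ (k + 1) * g θ * R (ρe θ)) := by ring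
          rw [this, hs2, one_mul]
        rw [heq]
        exact key_bound _ ⟨by linarith [hmem.1, hℓpos], hmem.2⟩ θ hθ)
      (by rw [hρe0]; simpa [hℓdef] using half_lt_self hℓpos)
      (by rw [hρe0]; exact hhigh0)
    have hmemE : ∀ θ ∈ Set.Icc (0:ℝ) (2 * π), ρe θ ∈ Set.Icc (ℓ / 2) δ := by
      intro θ hθ
      have h1 := hbandE θ hθ
      rw [hρe0] at h1
      constructor
      · have : ℓ ≤ ρ₀ * Real.exp (-(L * θ)) := by
          rw [hℓdef]
          apply mul_le_mul_of_nonneg_left _ hρ₀pos.le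
          exact Real.exp_le_exp.2 (by nlinarith [hθ.2, hL0.le])
        linarith [h1.1, hℓpos]
      · have : ρ₀ * Real.exp (L * θ) ≤ ρ₀ * Real.exp (L * (2 * π)) := by
          apply mul_le_mul_of_nonneg_left _ hρ₀pos.le
          exact Real.exp_le_exp.2 (by nlinarith [hθ.2, hL0.le])
        linarith [h1.2]
    refine ⟨ρe, hρe0, ?_⟩
    intro θ hθ
    have hd := hρeD θ
    have hmem := hmemE θ hθ
    have heq : hstar (ρe θ) * (s * g θ) = ρe θ ^ (k + 1) * Qf (Real.cos θ) (Real.sin θ) * R (ρe θ) := by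
      rw [hstarval _ hmem, hh]
      have hgθ : g θ = Qf (Real.cos θ) (Real.sin θ) := rfl
      rw [← hgθ]
      have : s * (ρe θ ^ (k + 1) * R (ρe θ)) * (s * g θ)
          = (s * s) * (ρe θ ^ (k + 1) * g θ * R (ρe θ)) := by ring
      rw [this, hs2, one_mul]
    rw [heq] at hd
    exact hd
  · -- uniqueness / periodicity
    intro ρ hρinit hρd
    have hbandU := band (L := L) (T := 2 * π) (α := 0) (δ := δ)
      (f' := fun θ => ρ θ ^ (k + 1) * g θ * R (ρ θ)) hL0.le hπ le_rfl
      (fun θ hθ => hρd θ hθ)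
      (fun θ hθ hmem => key_bound _ hmem θ hθ)
      (by rw [hρinit]; positivity)
      (by rw [hρinit]; exact hhigh0)
    have hmemU : ∀ θ ∈ Set.Icc (0:ℝ) (2 * π), ρ θ ∈ Set.Icc (ℓ / 2) δ := by
      intro θ hθ
      have h1 := hbandU θ hθ
      rw [hρinit] at h1
      constructor
      · have : ℓ ≤ ρ₀ * Real.exp (-(L * θ)) := by
          rw [hℓdef]
          apply mul_le_mul_of_nonneg_left _ hρ₀pos.le
          exact Real.exp_le_exp.2 (by nlinarith [hθ.2, hL0.le])
        linarith [h1.1, hℓpos]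
      · have : ρ₀ * Real.exp (L * θ) ≤ ρ₀ * Real.exp (L * (2 * π)) := by
          apply mul_le_mul_of_nonneg_left _ hρ₀pos.le
          exact Real.exp_le_exp.2 (by nlinarith [hθ.2, hL0.le])
        linarith [h1.2]
    set φ : ℝ → ℝ := fun θ => Fv (ρ θ) - s * G θ with hφdef
    have hφd : ∀ θ ∈ Set.Icc (0:ℝ) (2 * π), HasDerivAt φ 0 θ := by
      intro θ hθ
      have h2 := (hFD (ρ θ)).comp θ (hρd θ hθ)
      have h3 := (hGD θ).const_mul s
      have h4 := h2.sub h3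
      have hmem := hmemU θ hθ
      have hne0 : h (ρ θ) ≠ 0 := hhne _ (hsubIcc hmem)
      have hval : (hstar (ρ θ))⁻¹ * (ρ θ ^ (k + 1) * Qf (Real.cos θ) (Real.sin θ) * R (ρ θ))
          - s * g θ = 0 := by
        rw [hstarval _ hmem, mul_inv, hsinv]
        have hgθ : Qf (Real.cos θ) (Real.sin θ) = g θ := rfl
        have hhx : ρ θ ^ (k + 1) * Qf (Real.cos θ) (Real.sin θ) * R (ρ θ) = h (ρ θ) * g θ := by
          rw [hgθ, hh]; ring
        rw [hhx, mul_assoc, inv_mul_cancel_left₀ hne0]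
        ring
      rw [← hval]
      exact h4
    have hφconst := constant_of_has_deriv_right_zero (f := φ) (a := 0) (b := 2 * π)
      (fun c hc => ((hφd c hc).continuousAt).continuousWithinAt)
      (fun c hc => (hφd c (Set.Ico_subset_Icc_self hc)).hasDerivWithinAt)
    have h5 := hφconst (2 * π) ⟨hπ, le_rfl⟩
    rw [hφdef] at h5
    simp only [hG0, hG2π, mul_zero, sub_zero] at h5
    rw [hρinit] at h5 ⊢
    exact hFmono.injective h5
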